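/- arXiv:2402.18168 — 3 statements merged into one kernel-verified Lean document; each statement's English description precedes it below -/
import Mathlib

section
/- The star operator respects graded antisymmetry: for all A, B ∈ 𝕄(V) and T ∈ 𝕃(W), AB ⋆ T = −(−1)^{|A||B|} (BA ⋆ T) in 𝕃(V ⊕ W ⊕ s(V⊗W)). -/
universe u

/-- A graded Lie algebra over `ℚ`: a `ℤ`-graded vector space with a bilinear bracket
satisfying graded antisymmetry and the graded Jacobi identity on homogeneous elements. -/
structure GLA (Lc : Type u) [AddCommGroup Lc] [Module ℚ Lc] where
  grade : ℤ → Submodule ℚ Lc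
  internal : DirectSum.IsInternal grade
  br : Lc →ₗ[ℚ] Lc →ₗ[ℚ] Lc
  br_mem : ∀ {i j : ℤ} {x y : Lc}, x ∈ grade i → y ∈ grade j → br x y ∈ grade (i + j)
  antisymm : ∀ {i j : ℤ} {x y : Lc}, x ∈ grade i → y ∈ grade j →
      br x y = -((-1 : ℚ) ^ (i * j) • br y x)
  jacobi : ∀ {i j : ℤ} {x y : Lc} (z : Lc), x ∈ grade i → y ∈ grade j →
      br x (br y z) = br (br x y) z + (-1 : ℚ) ^ (i * j) • br y (br x z)

namespace GLA

variable {Lc : Type u} [AddCommGroup Lc] [Module ℚ Lc]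

/-- The Lie subalgebra (as a submodule closed under the bracket) generated by
a graded family of subspaces. -/
def lieSub (G : GLA Lc) (p : ℤ → Submodule ℚ Lc) : Submodule ℚ Lc :=
  sInf {q | (∀ i, p i ≤ q) ∧ ∀ x ∈ q, ∀ y ∈ q, G.br x y ∈ q}

/-- The submodule of decomposable elements of `L`: the span of all brackets. -/
def dec (G : GLA Lc) : Submodule ℚ Lc :=
  Submodule.span ℚ {x : Lc | ∃ a b : Lc, x = G.br a b}

/-- A graded Lie algebra is reduced if it vanishes in degrees `≤ 0`. -/
def Reduced (G : GLA Lc) : Prop := ∀ i : ℤ, i ≤ 0 → G.grade i = ⊥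

end GLA


/-- Trees of the free graded linear magma on the graded subspace family `P`
(homogeneous generators and formal binary products). -/
inductive Mag {Lc : Type u} [AddCommGroup Lc] [Module ℚ Lc]
    (P : ℤ → Submodule ℚ Lc) : Type u
  | of (i : ℤ) (v : Lc) (hv : v ∈ P i) : Mag P
  | mul : Mag P → Mag P → Mag P

namespace Mag

variable {Lc : Type u} [AddCommGroup Lc] [Module ℚ Lc] {P : ℤ → Submodule ℚ Lc}

/-- Degree of a magma element. -/
def deg : Mag P → ℤ
  | of i _ _ => i
  | mul A B => deg A + deg B

/-- The class of a magma element in the (free) graded Lie algebra. -/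
def real (G : GLA Lc) : Mag P → Lc
  | of _ v _ => v
  | mul A B => G.br (real G A) (real G B)

/-- The star operator `⋆ : 𝕄(V) ⊗ 𝕃(W) → L`, applied to a homogeneous element `T`
of degree `t`, defined recursively by `a ⋆ T = 0` for a generator `a` and
`AB ⋆ T = (-1)^{|A|} σ_Ā σ_B̄ (T) + (-1)^{|B||T|} [A ⋆ T, B̄] + [Ā, B ⋆ T]`. -/
def star (G : GLA Lc) (sg : ℤ → Lc → (Lc →ₗ[ℚ] Lc)) (t : ℤ) : Mag P → Lc → Lc
  | of _ _ _, _ => 0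
  | mul A B, T =>
      (-1 : ℚ) ^ deg A • sg (deg A) (real G A) (sg (deg B) (real G B) T)
        + (-1 : ℚ) ^ (deg B * t) • G.br (star G sg t A T) (real G B)
        + G.br (real G A) (star G sg t B T)

end Mag

/-- Remark 3.14.  The star operator respects graded antisymmetry:
for all `A, B ∈ 𝕄(V)` and all homogeneous `T ∈ 𝕃(W)`,
`AB ⋆ T = -(-1)^{|A||B|} (BA ⋆ T)` in `𝕃(V ⊕ W ⊕ s(V⊗W))`. -/
theorem statement12
    {Lc : Type u} [AddCommGroup Lc] [Module ℚ Lc] (G : GLA Lc)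
    (V W Sp : ℤ → Submodule ℚ Lc)
    -- `V` and `W` are reduced graded vector spaces
    (hVred : ∀ i : ℤ, i ≤ 0 → V i = ⊥) (hWred : ∀ i : ℤ, i ≤ 0 → W i = ⊥)
    (hV : ∀ i, V i ≤ G.grade i) (hW : ∀ i, W i ≤ G.grade i) (hSp : ∀ i, Sp i ≤ G.grade i)
    -- the suspension `s(v ⊗ w)`, bilinear, of degree `|v|+|w|+1`
    (sus : Lc →ₗ[ℚ] Lc →ₗ[ℚ] Lc)
    (hsus : ∀ {i j : ℤ} {v w : Lc}, v ∈ V i → w ∈ W j → sus v w ∈ Sp (i + j + 1))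
    -- `L = 𝕃(V ⊕ W ⊕ s(V ⊗ W))` is generated by `V ⊕ W ⊕ s(V ⊗ W)`
    (hgen : G.lieSub (fun i => V i ⊔ W i ⊔ Sp i) = ⊤)
    -- the derivations `σ_A` for homogeneous `A ∈ 𝕃(V ⊕ W)`: `σ_A` has degree `|A| + 1`,
    -- `σ_v(w) = s(v⊗w)`, `σ_w(v) = (-1)^{|v||w|} s(v⊗w)`, `σ_v(v') = σ_w(w') = 0`,
    -- `σ_v`, `σ_w` vanish on `s(V⊗W)`, and on generators
    -- `σ_A(v) = (-1)^{|v||A|} σ_v(A)`, `σ_A(w) = (-1)^{|w||A|} σ_w(A)`, `σ_A(s(v⊗w)) = 0`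
    (sg : ℤ → Lc → (Lc →ₗ[ℚ] Lc))
    (hsg_grade : ∀ {a : ℤ} {A : Lc}, A ∈ G.lieSub (fun i => V i ⊔ W i) → A ∈ G.grade a →
      ∀ {n : ℤ} {x : Lc}, x ∈ G.grade n → sg a A x ∈ G.grade (n + a + 1))
    (hsg_der : ∀ {a : ℤ} {A : Lc}, A ∈ G.lieSub (fun i => V i ⊔ W i) → A ∈ G.grade a →
      ∀ {n : ℤ} (x y : Lc), x ∈ G.grade n →
      sg a A (G.br x y) = G.br (sg a A x) y + (-1 : ℚ) ^ ((a + 1) * n) • G.br x (sg a A y))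
    (hsg_vw : ∀ {i j : ℤ} {v w : Lc}, v ∈ V i → w ∈ W j → sg i v w = sus v w)
    (hsg_wv : ∀ {i j : ℤ} {v w : Lc}, v ∈ V i → w ∈ W j →
      sg j w v = (-1 : ℚ) ^ (i * j) • sus v w)
    (hsg_vv : ∀ {i i' : ℤ} {v v' : Lc}, v ∈ V i → v' ∈ V i' → sg i v v' = 0)
    (hsg_ww : ∀ {j j' : ℤ} {w w' : Lc}, w ∈ W j → w' ∈ W j' → sg j w w' = 0)
    (hsg_vS : ∀ {i k : ℤ} {v x : Lc}, v ∈ V i → x ∈ Sp k → sg i v x = 0)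
    (hsg_wS : ∀ {j k : ℤ} {w x : Lc}, w ∈ W j → x ∈ Sp k → sg j w x = 0)
    (hsg_Av : ∀ {a : ℤ} {A : Lc}, A ∈ G.lieSub (fun i => V i ⊔ W i) → A ∈ G.grade a →
      ∀ {i : ℤ} {v : Lc}, v ∈ V i → sg a A v = (-1 : ℚ) ^ (i * a) • sg i v A)
    (hsg_Aw : ∀ {a : ℤ} {A : Lc}, A ∈ G.lieSub (fun i => V i ⊔ W i) → A ∈ G.grade a →
      ∀ {j : ℤ} {w : Lc}, w ∈ W j → sg a A w = (-1 : ℚ) ^ (j * a) • sg j w A)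
    (hsg_AS : ∀ {a : ℤ} {A : Lc}, A ∈ G.lieSub (fun i => V i ⊔ W i) → A ∈ G.grade a →
      ∀ {k : ℤ} {x : Lc}, x ∈ Sp k → sg a A x = 0)
 :
    ∀ (A B : Mag V) {t : ℤ} {T : Lc}, T ∈ G.lieSub W → T ∈ G.grade t →
      Mag.star G sg t (Mag.mul A B) T
        = -((-1 : ℚ) ^ (Mag.deg A * Mag.deg B) • Mag.star G sg t (Mag.mul B A) T) := by
  
  -- sign lemmas
  have hne : (-1 : ℚ) ≠ 0 := by norm_num
  have eadd : ∀ m n : ℤ, (-1:ℚ)^(m+n) = (-1:ℚ)^m * (-1:ℚ)^n := fun m n => zpow_add₀ hne m n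
  have etwo : ∀ k : ℤ, (-1:ℚ)^(2*k) = 1 := by
    intro k; rw [zpow_mul]; norm_num
  have eeq : ∀ m n : ℤ, (∃ k, m = n + 2*k) → (-1:ℚ)^m = (-1:ℚ)^n := by
    rintro m n ⟨k, rfl⟩; rw [eadd, etwo, mul_one]
  have eneg : ∀ m : ℤ, -((-1:ℚ)^m) = (-1:ℚ)^(1+m) := by
    intro m; rw [eadd]; norm_num
  -- lieSub helpers
  have hle : ∀ (p : ℤ → Submodule ℚ Lc) (i : ℤ), p i ≤ G.lieSub p := by
    intro p i
    exact le_sInf fun q hq => hq.1 i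
  have hbr : ∀ (p : ℤ → Submodule ℚ Lc) {x y : Lc},
      x ∈ G.lieSub p → y ∈ G.lieSub p → G.br x y ∈ G.lieSub p := by
    intro p x y hx hy
    exact Submodule.mem_sInf.2 fun q hq =>
      hq.2 x (Submodule.mem_sInf.1 hx q hq) y (Submodule.mem_sInf.1 hy q hq)
  have hlieLe : ∀ (p : ℤ → Submodule ℚ Lc) (q : Submodule ℚ Lc),
      (∀ i, p i ≤ q) → (∀ x ∈ q, ∀ y ∈ q, G.br x y ∈ q) → G.lieSub p ≤ q :=
    fun p q h1 h2 => sInf_le ⟨h1, h2⟩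
  -- generator memberships
  have hVW : ∀ {i : ℤ} {v : Lc}, v ∈ V i → v ∈ G.lieSub (fun i => V i ⊔ W i) :=
    fun {i v} hv => hle _ i (le_sup_left (α := Submodule ℚ Lc) hv)
  have hWVW : ∀ {j : ℤ} {w : Lc}, w ∈ W j → w ∈ G.lieSub (fun i => V i ⊔ W i) :=
    fun {j w} hw => hle _ j (le_sup_right (α := Submodule ℚ Lc) hw)
  -- real lemmas
  have hrgr : ∀ C : Mag V, Mag.real G C ∈ G.grade (Mag.deg C) := by
    intro C; induction C with
    | of i v hv => exact hV i hv
    | mul C1 C2 ih1 ih2 => exact G.br_mem ih1 ih2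
  have hrVW : ∀ C : Mag V, Mag.real G C ∈ G.lieSub (fun i => V i ⊔ W i) := by
    intro C; induction C with
    | of i v hv => exact hVW hv
    | mul C1 C2 ih1 ih2 => exact hbr _ ih1 ih2
  have hrZ : ∀ C : Mag V, Mag.real G C ∈ G.lieSub (fun i => V i ⊔ Sp i) := by
    intro C; induction C with
    | of i v hv => exact hle _ i (le_sup_left (α := Submodule ℚ Lc) hv)
    | mul C1 C2 ih1 ih2 => exact hbr _ ih1 ih2
  -- σ_v kills Mag V
  have hv0 : ∀ {i : ℤ} {v : Lc}, v ∈ V i → ∀ C : Mag V, sg i v (Mag.real G C) = 0 := by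
    intro i v hv C; induction C with
    | of i' v' hv' => exact hsg_vv hv hv'
    | mul C1 C2 ih1 ih2 =>
      have hd := hsg_der (hVW hv) (hV i hv) (Mag.real G C1) (Mag.real G C2) (hrgr C1)
      show sg i v (G.br (Mag.real G C1) (Mag.real G C2)) = 0
      rw [hd, ih1, ih2]
      simp
  have hAv0 : ∀ (C : Mag V) {i : ℤ} {v : Lc}, v ∈ V i →
      sg (Mag.deg C) (Mag.real G C) v = 0 := by
    intro C i v hv
    rw [hsg_Av (hrVW C) (hrgr C) hv, hv0 hv C, smul_zero]
  -- σ_w maps Mag V into the V ⊔ Sp subalgebra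
  have hwZ : ∀ {j : ℤ} {w : Lc}, w ∈ W j → ∀ C : Mag V,
      sg j w (Mag.real G C) ∈ G.lieSub (fun i => V i ⊔ Sp i) := by
    intro j w hw C; induction C with
    | of i v hv =>
      show sg j w v ∈ _
      rw [hsg_wv hv hw]
      exact Submodule.smul_mem _ _
        (hle _ (i + j + 1) (le_sup_right (α := Submodule ℚ Lc) (hsus hv hw)))
    | mul C1 C2 ih1 ih2 =>
      show sg j w (G.br (Mag.real G C1) (Mag.real G C2)) ∈ _
      rw [hsg_der (hWVW hw) (hW j hw) _ _ (hrgr C1)]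
      exact Submodule.add_mem _ (hbr _ ih1 (hrZ C2))
        (Submodule.smul_mem _ _ (hbr _ (hrZ C1) ih2))
  -- span of homogeneous elements with a linear property: bracket closure
  have spanbr : ∀ (s : Set Lc),
      (∀ x ∈ s, ∀ y ∈ s, G.br x y ∈ Submodule.span ℚ s) →
      ∀ x ∈ Submodule.span ℚ s, ∀ y ∈ Submodule.span ℚ s,
        G.br x y ∈ Submodule.span ℚ s := by
    intro s hs x hx
    induction hx using Submodule.span_induction with
    | mem x hxs =>
      intro y hy
      induction hy using Submodule.span_induction with
      | mem y hys => exact hs _ hxs _ hys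
      | zero => simpa using (Submodule.span ℚ s).zero_mem
      | add y z hy hz ihy ihz => simpa [map_add] using Submodule.add_mem _ ihy ihz
      | smul c y hy ihy => simpa [map_smul] using Submodule.smul_mem _ c ihy
    | zero => intro y hy; simpa using (Submodule.span ℚ s).zero_mem
    | add x z hx hz ihx ihz =>
      intro y hy
      have h1 := ihx y hy; have h2 := ihz y hy
      simpa [map_add, LinearMap.add_apply] using Submodule.add_mem _ h1 h2
    | smul c x hx ihx =>
      intro y hy
      have h1 := ihx y hy
      simpa [map_smul, LinearMap.smul_apply] using Submodule.smul_mem _ c h1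
  -- σ_C kills the V ⊔ Sp subalgebra
  have hkillZ : ∀ (C : Mag V) {x : Lc}, x ∈ G.lieSub (fun i => V i ⊔ Sp i) →
      sg (Mag.deg C) (Mag.real G C) x = 0 := by
    intro C
    set f := sg (Mag.deg C) (Mag.real G C) with hf
    set s : Set Lc := {x | ∃ n : ℤ, x ∈ G.grade n ∧ f x = 0} with hsdef
    have hsub : G.lieSub (fun i => V i ⊔ Sp i) ≤ Submodule.span ℚ s := by
      apply hlieLe
      · intro i
        apply sup_le
        · intro v hv
          exact Submodule.subset_span ⟨i, hV i hv, hAv0 C hv⟩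
        · intro x hx
          exact Submodule.subset_span ⟨i, hSp i hx, hsg_AS (hrVW C) (hrgr C) hx⟩
      · apply spanbr
        rintro x ⟨n, hxg, hx0⟩ y ⟨m, hyg, hy0⟩
        refine Submodule.subset_span ⟨n + m, G.br_mem hxg hyg, ?_⟩
        rw [show f (G.br x y) = _ from hsg_der (hrVW C) (hrgr C) x y hxg, hx0, hy0]
        simp
    intro x hx
    have : x ∈ Submodule.span ℚ s := hsub hx
    have hker : Submodule.span ℚ s ≤ LinearMap.ker f :=
      Submodule.span_le.2 (by rintro x ⟨n, _, hx0⟩; exact LinearMap.mem_ker.2 hx0)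
    exact LinearMap.mem_ker.1 (hker this)
  -- σ_C σ_D w = 0
  have hccw : ∀ (C D : Mag V) {j : ℤ} {w : Lc}, w ∈ W j →
      sg (Mag.deg C) (Mag.real G C) (sg (Mag.deg D) (Mag.real G D) w) = 0 := by
    intro C D j w hw
    rw [hsg_Aw (hrVW D) (hrgr D) hw, map_smul, hkillZ C (hwZ hw D), smul_zero]
  -- graded commutation of σ_C, σ_D on 𝕃(W)
  have hcomm : ∀ (C D : Mag V) {T' : Lc}, T' ∈ G.lieSub W →
      sg (Mag.deg C) (Mag.real G C) (sg (Mag.deg D) (Mag.real G D) T')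
        = (-1:ℚ)^((Mag.deg C + 1) * (Mag.deg D + 1)) •
          sg (Mag.deg D) (Mag.real G D) (sg (Mag.deg C) (Mag.real G C) T') := by
    intro C D
    set a := Mag.deg C with ha
    set b := Mag.deg D with hb
    set f := sg a (Mag.real G C) with hfdef
    set g := sg b (Mag.real G D) with hgdef
    set c : ℚ := (-1:ℚ)^((a + 1) * (b + 1)) with hc
    have hCl := hrVW C; have hCg := hrgr C
    have hDl := hrVW D; have hDg := hrgr D
    set s : Set Lc := {x | ∃ n : ℤ, x ∈ G.grade n ∧ f (g x) = c • g (f x)} with hsdef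
    have hsub : G.lieSub W ≤ Submodule.span ℚ s := by
      apply hlieLe
      · intro j w hw
        refine Submodule.subset_span ⟨j, hW j hw, ?_⟩
        rw [hccw C D hw, hccw D C hw, smul_zero]
      · apply spanbr
        rintro x ⟨n, hxg, hx0⟩ y ⟨m, hyg, hy0⟩
        refine Submodule.subset_span ⟨n + m, G.br_mem hxg hyg, ?_⟩
        have hgx : g x ∈ G.grade (n + b + 1) := hsg_grade hDl hDg hxg
        have hfx : f x ∈ G.grade (n + a + 1) := hsg_grade hCl hCg hxg
        have e1 : g (G.br x y) = G.br (g x) y + (-1:ℚ)^((b+1)*n) • G.br x (g y) :=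
          hsg_der hDl hDg x y hxg
        have e2 : f (G.br x y) = G.br (f x) y + (-1:ℚ)^((a+1)*n) • G.br x (f y) :=
          hsg_der hCl hCg x y hxg
        have e3 : f (G.br (g x) y)
            = G.br (f (g x)) y + (-1:ℚ)^((a+1)*(n+b+1)) • G.br (g x) (f y) :=
          hsg_der hCl hCg _ y hgx
        have e4 : f (G.br x (g y))
            = G.br (f x) (g y) + (-1:ℚ)^((a+1)*n) • G.br x (f (g y)) :=
          hsg_der hCl hCg x _ hxg
        have e5 : g (G.br (f x) y)
            = G.br (g (f x)) y + (-1:ℚ)^((b+1)*(n+a+1)) • G.br (f x) (g y) :=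
          hsg_der hDl hDg _ y hfx
        have e6 : g (G.br x (f y))
            = G.br (g x) (f y) + (-1:ℚ)^((b+1)*n) • G.br x (g (f y)) :=
          hsg_der hDl hDg x _ hxg
        have s1 : (-1:ℚ)^((a+1)*(n+b+1)) = c * (-1:ℚ)^((a+1)*n) := by
          rw [hc, ← eadd]; exact eeq _ _ ⟨0, by ring⟩
        have s2 : (-1:ℚ)^((b+1)*n) = c * (-1:ℚ)^((b+1)*(n+a+1)) := by
          rw [hc, ← eadd]; exact eeq _ _ ⟨-((a+1)*(b+1)), by ring⟩
        rw [e1, e2]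
        simp only [map_add, map_smul]
        rw [e3, e4, e5, e6]
        simp only [hx0, hy0]
        simp only [map_add, map_smul, LinearMap.add_apply, LinearMap.smul_apply]
        rw [s1, s2]
        module
    intro T' hT'
    have hmem : T' ∈ Submodule.span ℚ s := hsub hT'
    set L : Lc →ₗ[ℚ] Lc := f ∘ₗ g - c • (g ∘ₗ f) with hL
    have hker : Submodule.span ℚ s ≤ LinearMap.ker L := by
      apply Submodule.span_le.2
      rintro x ⟨n, _, hx0⟩
      refine LinearMap.mem_ker.2 ?_
      simp only [hL, LinearMap.sub_apply, LinearMap.comp_apply, LinearMap.smul_apply]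
      rw [hx0, sub_self]
    have := LinearMap.mem_ker.1 (hker hmem)
    simp only [hL, LinearMap.sub_apply, LinearMap.comp_apply, LinearMap.smul_apply] at this
    exact sub_eq_zero.1 this
  -- grade of the star operation
  have hstgr : ∀ (C : Mag V) {t : ℤ} {T : Lc}, T ∈ G.grade t →
      Mag.star G sg t C T ∈ G.grade (Mag.deg C + t + 2) := by
    intro C; induction C with
    | of i v hv =>
      intro t T hT
      show (0 : Lc) ∈ _
      exact zero_mem _
    | mul C1 C2 ih1 ih2 =>
      intro t T hT
      show (-1 : ℚ) ^ Mag.deg C1 • sg (Mag.deg C1) (Mag.real G C1)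
            (sg (Mag.deg C2) (Mag.real G C2) T)
          + (-1 : ℚ) ^ (Mag.deg C2 * t) • G.br (Mag.star G sg t C1 T) (Mag.real G C2)
          + G.br (Mag.real G C1) (Mag.star G sg t C2 T) ∈ _
      refine Submodule.add_mem _ (Submodule.add_mem _ ?_ ?_) ?_
      · have h2 : sg (Mag.deg C2) (Mag.real G C2) T ∈ G.grade (t + Mag.deg C2 + 1) :=
          hsg_grade (hrVW C2) (hrgr C2) hT
        have h1 := hsg_grade (hrVW C1) (hrgr C1) h2
        have heq : t + Mag.deg C2 + 1 + Mag.deg C1 + 1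
            = Mag.deg (Mag.mul C1 C2) + t + 2 := by
          show _ = Mag.deg C1 + Mag.deg C2 + t + 2; ring
        rw [heq] at h1
        exact Submodule.smul_mem _ _ h1
      · have h1 := G.br_mem (ih1 hT) (hrgr C2)
        have heq : Mag.deg C1 + t + 2 + Mag.deg C2 = Mag.deg (Mag.mul C1 C2) + t + 2 := by
          show _ = Mag.deg C1 + Mag.deg C2 + t + 2; ring
        rw [heq] at h1
        exact Submodule.smul_mem _ _ h1
      · have h1 := G.br_mem (hrgr C1) (ih2 hT)
        have heq : Mag.deg C1 + (Mag.deg C2 + t + 2) = Mag.deg (Mag.mul C1 C2) + t + 2 := by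
          show _ = Mag.deg C1 + Mag.deg C2 + t + 2; ring
        rw [heq] at h1
        exact h1
  -- main computation
  intro A B t T hTW hTt
  set a := Mag.deg A with ha
  set b := Mag.deg B with hb
  show (-1 : ℚ) ^ a • sg a (Mag.real G A) (sg b (Mag.real G B) T)
      + (-1 : ℚ) ^ (b * t) • G.br (Mag.star G sg t A T) (Mag.real G B)
      + G.br (Mag.real G A) (Mag.star G sg t B T)
    = -((-1 : ℚ) ^ (a * b) •
        ((-1 : ℚ) ^ b • sg b (Mag.real G B) (sg a (Mag.real G A) T)
          + (-1 : ℚ) ^ (a * t) • G.br (Mag.star G sg t B T) (Mag.real G A)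
          + G.br (Mag.real G B) (Mag.star G sg t A T)))
  rw [hcomm A B hTW,
    G.antisymm (hstgr A hTt) (hrgr B),
    G.antisymm (hrgr A) (hstgr B hTt)]
  have s1 : (-1:ℚ)^a * (-1:ℚ)^((a+1)*(b+1)) = -((-1:ℚ)^(a*b) * (-1:ℚ)^b) := by
    rw [← eadd, ← eadd, eneg]; exact eeq _ _ ⟨a, by ring⟩
  have s2 : (-1:ℚ)^(b*t) * (-1:ℚ)^((a + t + 2)*b) = (-1:ℚ)^(a*b) := by
    rw [← eadd]; exact eeq _ _ ⟨b*t + b, by ring⟩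
  have s3 : (-1:ℚ)^(a*(b + t + 2)) = (-1:ℚ)^(a*b) * (-1:ℚ)^(a*t) := by
    rw [← eadd]; exact eeq _ _ ⟨a, by ring⟩
  rw [smul_smul, s1, smul_neg, smul_smul, s2, s3]
  module
end

section
/- Let (𝕃(V),∂) with V = V₀ ⊕ V₁, ∂(V₀) = 0, ∂(V₁) ⊆ 𝕃(V₀), be the minimal Quillen model of a 2-cone X, let V' be a copy of V, and let (L,D) be the model of X × X with L = 𝕃(V ⊕ V' ⊕ s(V⊗V')). Let Δ : 𝕃(V₀) → L be the Lie morphism Δ(v) = v + v' and Γ : 𝕄(V₀) → L the map defined by Γ(v) = 0 and Γ(AB) = σ_Ā(B̄') − (−1)^{|A||B|} σ_B̄(Ā') + (1/2)(−1)^{|A|}[ΔĀ + Ā + Ā', ΓB] + (1/2)[ΓA, ΔB̄ + B̄ + B̄']. Then for every A ∈ 𝕄(V₀): D(Γ(A)) = Δ(Ā) − Ā − Ā'. -/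
universe u

namespace Mag

/-- The map `Γ : 𝕄(V₀) → L` defined by `Γ(v) = 0` and
`Γ(AB) = σ_Ā(B̄') - (-1)^{|A||B|} σ_B̄(Ā')
  + ½(-1)^{|A|}[ΔĀ + Ā + Ā', ΓB] + ½[ΓA, ΔB̄ + B̄ + B̄']`,
where `pr` is the "prime" (copy) map and `Dl` models the diagonal `Δ` on `𝕃(V₀)`. -/
def gam {Lc : Type u} [AddCommGroup Lc] [Module ℚ Lc] {P : ℤ → Submodule ℚ Lc}
    (G : GLA Lc) (sg : ℤ → Lc → (Lc →ₗ[ℚ] Lc)) (pr Dl : Lc →ₗ[ℚ] Lc) : Mag P → Lc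
  | of _ _ _ => 0
  | mul A B =>
      sg (deg A) (real G A) (pr (real G B))
        - (-1 : ℚ) ^ (deg A * deg B) • sg (deg B) (real G B) (pr (real G A))
        + ((2 : ℚ)⁻¹ * (-1 : ℚ) ^ deg A) •
            G.br (Dl (real G A) + real G A + pr (real G A)) (gam G sg pr Dl B)
        + (2 : ℚ)⁻¹ • G.br (gam G sg pr Dl A) (Dl (real G B) + real G B + pr (real G B))

end Mag

/-- Lemma 4.2.  For the model `(L, D)` of `X × X` of a 2-cone `X`, the
map `Γ : 𝕄(V₀) → L` defined by `Γ(v) = 0` and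
`Γ(AB) = σ_Ā(B̄') - (-1)^{|A||B|} σ_B̄(Ā') + ½(-1)^{|A|}[ΔĀ + Ā + Ā', ΓB]
        + ½[ΓA, ΔB̄ + B̄ + B̄']`
satisfies `D(Γ(A)) = Δ(Ā) - Ā - Ā'` for every `A ∈ 𝕄(V₀)`. -/
theorem statement16
    {Lc : Type u} [AddCommGroup Lc] [Module ℚ Lc] (G : GLA Lc)
    (V0 V1 W0 W1 Sp : ℤ → Submodule ℚ Lc)
    -- the ambient free Lie algebra is reduced
    (hred : G.Reduced)
    (hV0 : ∀ i, V0 i ≤ G.grade i) (hV1 : ∀ i, V1 i ≤ G.grade i)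
    (hW0 : ∀ i, W0 i ≤ G.grade i) (hW1 : ∀ i, W1 i ≤ G.grade i)
    (hSp : ∀ i, Sp i ≤ G.grade i)
    -- the suspension `s(v ⊗ w)`, bilinear, of degree `|v|+|w|+1`
    (sus : Lc →ₗ[ℚ] Lc →ₗ[ℚ] Lc)
    (hsus : ∀ {i j : ℤ} {v w : Lc}, v ∈ V0 i ⊔ V1 i → w ∈ W0 j ⊔ W1 j →
      sus v w ∈ Sp (i + j + 1))
    -- `L` is generated by `V ⊕ W ⊕ s(V ⊗ W)`
    (hgen : G.lieSub (fun i => V0 i ⊔ V1 i ⊔ W0 i ⊔ W1 i ⊔ Sp i) = ⊤)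
    -- the derivations `σ_A` for homogeneous `A ∈ 𝕃(V ⊕ W)`
    (sg : ℤ → Lc → (Lc →ₗ[ℚ] Lc))
    (hsg_grade : ∀ {a : ℤ} {A : Lc}, A ∈ G.lieSub (fun i => V0 i ⊔ V1 i ⊔ W0 i ⊔ W1 i) →
      A ∈ G.grade a → ∀ {n : ℤ} {x : Lc}, x ∈ G.grade n → sg a A x ∈ G.grade (n + a + 1))
    (hsg_der : ∀ {a : ℤ} {A : Lc}, A ∈ G.lieSub (fun i => V0 i ⊔ V1 i ⊔ W0 i ⊔ W1 i) →
      A ∈ G.grade a → ∀ {n : ℤ} (x y : Lc), x ∈ G.grade n →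
      sg a A (G.br x y) = G.br (sg a A x) y + (-1 : ℚ) ^ ((a + 1) * n) • G.br x (sg a A y))
    (hsg_vw : ∀ {i j : ℤ} {v w : Lc}, v ∈ V0 i ⊔ V1 i → w ∈ W0 j ⊔ W1 j →
      sg i v w = sus v w)
    (hsg_wv : ∀ {i j : ℤ} {v w : Lc}, v ∈ V0 i ⊔ V1 i → w ∈ W0 j ⊔ W1 j →
      sg j w v = (-1 : ℚ) ^ (i * j) • sus v w)
    (hsg_vv : ∀ {i i' : ℤ} {v v' : Lc}, v ∈ V0 i ⊔ V1 i → v' ∈ V0 i' ⊔ V1 i' →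
      sg i v v' = 0)
    (hsg_ww : ∀ {j j' : ℤ} {w w' : Lc}, w ∈ W0 j ⊔ W1 j → w' ∈ W0 j' ⊔ W1 j' →
      sg j w w' = 0)
    (hsg_vS : ∀ {i k : ℤ} {v x : Lc}, v ∈ V0 i ⊔ V1 i → x ∈ Sp k → sg i v x = 0)
    (hsg_wS : ∀ {j k : ℤ} {w x : Lc}, w ∈ W0 j ⊔ W1 j → x ∈ Sp k → sg j w x = 0)
    (hsg_Av : ∀ {a : ℤ} {A : Lc}, A ∈ G.lieSub (fun i => V0 i ⊔ V1 i ⊔ W0 i ⊔ W1 i) →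
      A ∈ G.grade a → ∀ {i : ℤ} {v : Lc}, v ∈ V0 i ⊔ V1 i →
      sg a A v = (-1 : ℚ) ^ (i * a) • sg i v A)
    (hsg_Aw : ∀ {a : ℤ} {A : Lc}, A ∈ G.lieSub (fun i => V0 i ⊔ V1 i ⊔ W0 i ⊔ W1 i) →
      A ∈ G.grade a → ∀ {j : ℤ} {w : Lc}, w ∈ W0 j ⊔ W1 j →
      sg a A w = (-1 : ℚ) ^ (j * a) • sg j w A)
    (hsg_AS : ∀ {a : ℤ} {A : Lc}, A ∈ G.lieSub (fun i => V0 i ⊔ V1 i ⊔ W0 i ⊔ W1 i) →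
      A ∈ G.grade a → ∀ {k : ℤ} {x : Lc}, x ∈ Sp k → sg a A x = 0)
    -- the degree `-1` derivation `D` of `L`
    (D : Lc →ₗ[ℚ] Lc)
    (hD_grade : ∀ {i : ℤ} {x : Lc}, x ∈ G.grade i → D x ∈ G.grade (i - 1))
    (hD_der : ∀ {i : ℤ} (x y : Lc), x ∈ G.grade i →
      D (G.br x y) = G.br (D x) y + (-1 : ℚ) ^ ((-1 : ℤ) * i) • G.br x (D y))
    -- `D = ∂_V` on `V`, `D = ∂_W` on `W`: two-stage (2-cone) minimal models
    (hD_V0 : ∀ {i : ℤ} {v : Lc}, v ∈ V0 i → D v = 0)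
    (hD_W0 : ∀ {j : ℤ} {w : Lc}, w ∈ W0 j → D w = 0)
    (hD_V1 : ∀ {i : ℤ} {v : Lc}, v ∈ V1 i → D v ∈ G.lieSub V0)
    (hD_W1 : ∀ {j : ℤ} {w : Lc}, w ∈ W1 j → D w ∈ G.lieSub W0)
    (hD_V1dec : ∀ {i : ℤ} {v : Lc}, v ∈ V1 i → D v ∈ G.dec)
    (hD_W1dec : ∀ {j : ℤ} {w : Lc}, w ∈ W1 j → D w ∈ G.dec)
    -- a chosen magma representative `(∂_V v)‾ ∈ 𝕄(V₀)` of `∂_V v` for `v ∈ V₁`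
    (rep : ∀ (i : ℤ) (v : Lc), v ∈ V1 i → Mag V0)
    (hrep : ∀ (i : ℤ) (v : Lc) (h : v ∈ V1 i), Mag.real G (rep i v h) = D v)
    (hrepdeg : ∀ (i : ℤ) (v : Lc) (h : v ∈ V1 i), Mag.deg (rep i v h) = i - 1)
    -- the value of `D` on the suspension generators, formula (7) of the paper
    (hD_sus00 : ∀ {i j : ℤ} {v w : Lc}, v ∈ V0 i → w ∈ W0 j → D (sus v w) = G.br v w)
    (hD_sus10 : ∀ {i j : ℤ} {v w : Lc}, v ∈ V1 i → w ∈ W0 j →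
      D (sus v w) = G.br v w - (-1 : ℚ) ^ ((i + 1) * j) • sg j w (D v))
    (hD_sus01 : ∀ {i j : ℤ} {v w : Lc}, v ∈ V0 i → w ∈ W1 j →
      D (sus v w) = G.br v w - (-1 : ℚ) ^ i • sg i v (D w))
    (hD_sus11 : ∀ {i j : ℤ} {v w : Lc} (hv : v ∈ V1 i) (hw : w ∈ W1 j),
      D (sus v w) = G.br v w - (-1 : ℚ) ^ ((i + 1) * j) • sg j w (D v)
        - (-1 : ℚ) ^ i • sg i v (D w)
        + (-1 : ℚ) ^ i • Mag.star G sg (j - 1) (rep i v hv) (D w))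
    -- `(L, D)` is a dgl (Theorem 3.8 of the paper)
    (hDD : ∀ x : Lc, D (D x) = 0)
    -- `W = V'` is a copy of `V`: the "prime" map, a dgl isomorphism onto the copy
    (pr : Lc →ₗ[ℚ] Lc)
    (hpr_V0 : ∀ {i : ℤ} {v : Lc}, v ∈ V0 i → pr v ∈ W0 i)
    (hpr_V1 : ∀ {i : ℤ} {v : Lc}, v ∈ V1 i → pr v ∈ W1 i)
    (hpr_br : ∀ {x y : Lc}, x ∈ G.lieSub (fun i => V0 i ⊔ V1 i) →
      y ∈ G.lieSub (fun i => V0 i ⊔ V1 i) → pr (G.br x y) = G.br (pr x) (pr y))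
    (hpr_D : ∀ {x : Lc}, x ∈ G.lieSub (fun i => V0 i ⊔ V1 i) → pr (D x) = D (pr x))
    (hpr_onto0 : ∀ {j : ℤ} {w : Lc}, w ∈ W0 j → ∃ v ∈ V0 j, pr v = w)
    (hpr_onto1 : ∀ {j : ℤ} {w : Lc}, w ∈ W1 j → ∃ v ∈ V1 j, pr v = w)
    -- the Lie morphism `Δ : 𝕃(V₀) → L`, `Δ(v) = v + v'`, modelling the diagonal on `𝕃(V₀)`
    (Dl : Lc →ₗ[ℚ] Lc)
    (hDl_v : ∀ {i : ℤ} {v : Lc}, v ∈ V0 i → Dl v = v + pr v)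
    (hDl_br : ∀ {x y : Lc}, x ∈ G.lieSub V0 → y ∈ G.lieSub V0 →
      Dl (G.br x y) = G.br (Dl x) (Dl y))
 :
    ∀ M : Mag V0,
      D (Mag.gam G sg pr Dl M)
        = Dl (Mag.real G M) - Mag.real G M - pr (Mag.real G M) := by

  -- basic lieSub facts
  have hmem_of : ∀ (p : ℤ → Submodule ℚ Lc) (i : ℤ) (v : Lc), v ∈ p i → v ∈ G.lieSub p := by
    intro p i v hv
    rw [GLA.lieSub, Submodule.mem_sInf]
    intro q hq; exact hq.1 i hv
  have hmem_br : ∀ (p : ℤ → Submodule ℚ Lc) (x y : Lc), x ∈ G.lieSub p → y ∈ G.lieSub p →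
      G.br x y ∈ G.lieSub p := by
    intro p x y hx hy
    rw [GLA.lieSub, Submodule.mem_sInf]
    rw [GLA.lieSub, Submodule.mem_sInf] at hx hy
    intro q hq; exact hq.2 x (hx q hq) y (hy q hq)
  have hmono : ∀ (p p' : ℤ → Submodule ℚ Lc), (∀ i, p i ≤ p' i) →
      G.lieSub p ≤ G.lieSub p' := by
    intro p p' h
    apply sInf_le_sInf
    rintro q ⟨h1, h2⟩
    exact ⟨fun i => (h i).trans (h1 i), h2⟩
  -- sign facts
  have hEm : ∀ m n : ℤ, (-1:ℚ)^m * (-1:ℚ)^n = (-1:ℚ)^(m+n) :=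
    fun m n => (zpow_add₀ (by norm_num) m n).symm
  have hE : ∀ m n k : ℤ, m = n + 2*k → (-1:ℚ)^m = (-1:ℚ)^n := by
    intro m n k h; subst h; rw [zpow_add₀ (by norm_num), zpow_mul]; norm_num
  have hE1 : ∀ m k : ℤ, m = 2*k → (-1:ℚ)^m = 1 := by
    intro m k h; subst h; rw [zpow_mul]; norm_num
  have hcast : ∀ {m n : ℤ} {x : Lc}, m = n → x ∈ G.grade m → x ∈ G.grade n := by
    rintro m n x rfl h; exact h
  have hleP2 : ∀ i, V0 i ≤ V0 i ⊔ V1 i := fun i => le_sup_left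
  have hleP4 : ∀ i, V0 i ≤ V0 i ⊔ V1 i ⊔ W0 i ⊔ W1 i :=
    fun i => (le_sup_left.trans le_sup_left).trans le_sup_left
  -- facts about magma elements
  have hfac : ∀ A : Mag V0, Mag.real G A ∈ G.lieSub V0 ∧
      Mag.real G A ∈ G.grade (Mag.deg A) ∧ D (Mag.real G A) = 0 ∧
      pr (Mag.real G A) ∈ G.grade (Mag.deg A) ∧
      Dl (Mag.real G A) ∈ G.grade (Mag.deg A) ∧ D (Dl (Mag.real G A)) = 0 := by
    intro A
    induction A with
    | of i v hv =>
      simp only [Mag.real, Mag.deg]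
      refine ⟨hmem_of _ i v hv, hV0 i hv, hD_V0 hv, hW0 i (hpr_V0 hv), ?_, ?_⟩
      · rw [hDl_v hv]; exact add_mem (hV0 i hv) (hW0 i (hpr_V0 hv))
      · rw [hDl_v hv, map_add, hD_V0 hv, hD_W0 (hpr_V0 hv), add_zero]
    | mul A B ihA ihB =>
      obtain ⟨hA1, hA2, hA3, hA4, hA5, hA6⟩ := ihA
      obtain ⟨hB1, hB2, hB3, hB4, hB5, hB6⟩ := ihB
      have hA1' : Mag.real G A ∈ G.lieSub (fun i => V0 i ⊔ V1 i) := hmono _ _ hleP2 hA1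
      have hB1' : Mag.real G B ∈ G.lieSub (fun i => V0 i ⊔ V1 i) := hmono _ _ hleP2 hB1
      simp only [Mag.real, Mag.deg]
      refine ⟨hmem_br _ _ _ hA1 hB1, G.br_mem hA2 hB2, ?_, ?_, ?_, ?_⟩
      · rw [hD_der _ _ hA2, hA3, hB3]; simp
      · rw [hpr_br hA1' hB1']; exact G.br_mem hA4 hB4
      · rw [hDl_br hA1 hB1]; exact G.br_mem hA5 hB5
      · rw [hDl_br hA1 hB1, hD_der _ _ hA5, hA6, hB6]; simp
  have hmemP4 : ∀ A : Mag V0,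
      Mag.real G A ∈ G.lieSub (fun i => V0 i ⊔ V1 i ⊔ W0 i ⊔ W1 i) :=
    fun A => hmono _ _ hleP4 (hfac A).1
  have hprD : ∀ A : Mag V0, D (pr (Mag.real G A)) = 0 := by
    intro A
    rw [← hpr_D (hmono _ _ hleP2 (hfac A).1), (hfac A).2.2.1, map_zero]
  -- the key lemma: D(σ_Ā (B̄')) = [Ā, B̄']
  have sgD : ∀ B A : Mag V0,
      D (sg (Mag.deg A) (Mag.real G A) (pr (Mag.real G B)))
        = G.br (Mag.real G A) (pr (Mag.real G B)) := by
    intro B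
    induction B with
    | of j w hw =>
      have hwW : pr w ∈ W0 j := hpr_V0 hw
      have hwg : pr w ∈ G.grade j := hW0 j hwW
      have hwP4 : pr w ∈ G.lieSub (fun i => V0 i ⊔ V1 i ⊔ W0 i ⊔ W1 i) := by
        refine hmem_of _ j _ ?_
        exact Submodule.mem_sup_left (Submodule.mem_sup_right hwW)
      intro A
      induction A with
      | of i v hv =>
        simp only [Mag.real, Mag.deg]
        rw [hsg_vw (Submodule.mem_sup_left hv) (Submodule.mem_sup_left hwW)]
        exact hD_sus00 hv hwW
      | mul A1 A2 ih1 ih2 =>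
        simp only [Mag.real, Mag.deg] at ih1 ih2 ⊢
        have h1g := (hfac A1).2.1
        have h2g := (hfac A2).2.1
        set a1 := Mag.deg A1 with ha1
        set a2 := Mag.deg A2 with ha2
        set r1 := Mag.real G A1 with hr1
        set r2 := Mag.real G A2 with hr2
        have hinv : ∀ (C : Mag V0), sg j (pr w) (Mag.real G C)
            = (-1:ℚ)^(j * Mag.deg C) • sg (Mag.deg C) (Mag.real G C) (pr w) := by
          intro C
          rw [hsg_Aw (hmemP4 C) (hfac C).2.1 (Submodule.mem_sup_left hwW),
            smul_smul, hEm, hE1 _ (Mag.deg C * j) (by ring), one_smul]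
        have hbrmem : G.br r1 r2 ∈ G.lieSub (fun i => V0 i ⊔ V1 i ⊔ W0 i ⊔ W1 i) :=
          hmem_br _ _ _ (hmemP4 A1) (hmemP4 A2)
        have hstep : sg (a1 + a2) (G.br r1 r2) (pr w)
            = (-1:ℚ)^(j*a2) • G.br (sg a1 r1 (pr w)) r2
              + (-1:ℚ)^(a1) • G.br r1 (sg a2 r2 (pr w)) := by
          rw [hsg_Aw hbrmem (G.br_mem h1g h2g) (Submodule.mem_sup_left hwW),
            hsg_der hwP4 hwg r1 r2 h1g, hinv A1, hinv A2]
          simp only [map_add, map_sub, map_smul, map_neg, LinearMap.add_apply, LinearMap.sub_apply, LinearMap.smul_apply, LinearMap.neg_apply, smul_add, smul_sub, smul_neg, smul_smul]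
          match_scalars
          all_goals try simp only [← ha1, ← ha2]
          · have f1 : (-1:ℚ)^(j*(a1+a2)) * (-1:ℚ)^(j*a1) = (-1:ℚ)^(j*a2) := by
              rw [hEm]; exact hE _ _ (j*a1) (by ring)
            linear_combination f1
          · have f2 : (-1:ℚ)^(j*(a1+a2)) * ((-1:ℚ)^((j+1)*a1) * (-1:ℚ)^(j*a2)) = (-1:ℚ)^a1 := by
              rw [hEm, hEm]; exact hE _ _ (j*(a1+a2)) (by ring)
            linear_combination f2
        rw [hstep, map_add, map_smul, map_smul,
          hD_der _ _ (hsg_grade (hmemP4 A1) h1g hwg),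
          hD_der _ _ h1g, ih1, ih2, (hfac A1).2.2.1, (hfac A2).2.2.1, map_zero]
        simp only [LinearMap.map_zero, LinearMap.zero_apply, smul_zero, add_zero, zero_add]
        have hjac := G.jacobi (pr w) h1g h2g
        have hanti := G.antisymm (G.br_mem h1g hwg) h2g
        rw [hanti]
        rw [show G.br (G.br r1 r2) (pr w)
            = G.br r1 (G.br r2 (pr w)) - (-1:ℚ)^(a1*a2) • G.br r2 (G.br r1 (pr w)) by
          rw [hjac]; abel]
        simp only [map_add, map_sub, map_smul, map_neg, LinearMap.add_apply, LinearMap.sub_apply, LinearMap.smul_apply, LinearMap.neg_apply, smul_add, smul_sub, smul_neg, smul_smul]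
        match_scalars
        all_goals try simp only [← ha1, ← ha2]
        · have f3 : (-1:ℚ)^(j*a2) * (-1:ℚ)^((a1+j)*a2) = (-1:ℚ)^(a1*a2) := by
            rw [hEm]; exact hE _ _ (j*a2) (by ring)
          linear_combination -f3
        · have f4 : (-1:ℚ)^a1 * (-1:ℚ)^(-1*a1) = 1 := by
            rw [hEm]; exact hE1 _ 0 (by ring)
          linear_combination f4
    | mul B1 B2 ihB1 ihB2 =>
      intro A
      simp only [Mag.real, Mag.deg]
      have hAg := (hfac A).2.1
      have hA4 := hmemP4 A
      have hx1g := (hfac B1).2.2.2.1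
      have hx2g := (hfac B2).2.2.2.1
      have hprmul : pr (G.br (Mag.real G B1) (Mag.real G B2))
          = G.br (pr (Mag.real G B1)) (pr (Mag.real G B2)) :=
        hpr_br (hmono _ _ hleP2 (hfac B1).1) (hmono _ _ hleP2 (hfac B2).1)
      rw [hprmul, hsg_der hA4 hAg _ _ hx1g,
        map_add, map_smul,
        hD_der _ _ (hsg_grade hA4 hAg hx1g),
        hD_der _ _ hx1g, ihB1 A, ihB2 A, hprD B1, hprD B2]
      simp only [LinearMap.map_zero, LinearMap.zero_apply, smul_zero, add_zero, zero_add]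
      rw [G.jacobi (pr (Mag.real G B2)) hAg hx1g]
      simp only [map_add, map_sub, map_smul, map_neg, LinearMap.add_apply, LinearMap.sub_apply, LinearMap.smul_apply, LinearMap.neg_apply, smul_add, smul_sub, smul_neg, smul_smul]
      match_scalars
      · ring
      · have f6 : (-1:ℚ)^((Mag.deg A + 1)*Mag.deg B1) * (-1:ℚ)^(-1*Mag.deg B1)
            = (-1:ℚ)^(Mag.deg A * Mag.deg B1) := by
          rw [hEm]; exact hE _ _ 0 (by ring)
        linear_combination f6
  -- Γ is homogeneous of degree (deg M + 1)
  have hgamg : ∀ M : Mag V0, Mag.gam G sg pr Dl M ∈ G.grade (Mag.deg M + 1) := by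
    intro M
    induction M with
    | of i v hv => exact Submodule.zero_mem _
    | mul A B ihA ihB =>
      have hAg := (hfac A).2.1
      have hBg := (hfac B).2.1
      show _ ∈ G.grade (Mag.deg A + Mag.deg B + 1)
      rw [Mag.gam]
      refine add_mem (add_mem (sub_mem ?_ (Submodule.smul_mem _ _ ?_))
        (Submodule.smul_mem _ _ ?_)) (Submodule.smul_mem _ _ ?_)
      · exact hcast (by ring) (hsg_grade (hmemP4 A) hAg (hfac B).2.2.2.1)
      · exact hcast (by ring) (hsg_grade (hmemP4 B) hBg (hfac A).2.2.2.1)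
      · refine hcast (by ring) (G.br_mem (i := Mag.deg A) (j := Mag.deg B + 1) ?_ ihB)
        exact add_mem (add_mem (hfac A).2.2.2.2.1 hAg) (hfac A).2.2.2.1
      · refine hcast (by ring) (G.br_mem (i := Mag.deg A + 1) (j := Mag.deg B) ihA ?_)
        exact add_mem (add_mem (hfac B).2.2.2.2.1 hBg) (hfac B).2.2.2.1
  -- main induction
  intro M
  induction M with
  | of i v hv =>
    rw [Mag.gam, Mag.real, map_zero, hDl_v hv]
    abel
  | mul A B ihA ihB =>
    have hAg := (hfac A).2.1
    have hBg := (hfac B).2.1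
    set a := Mag.deg A with ha
    set b := Mag.deg B with hb
    set rA := Mag.real G A with hrA
    set rB := Mag.real G B with hrB
    have hKAg : Dl rA + rA + pr rA ∈ G.grade a :=
      add_mem (add_mem (hfac A).2.2.2.2.1 hAg) (hfac A).2.2.2.1
    have hKAD : D (Dl rA + rA + pr rA) = 0 := by
      rw [map_add, map_add, (hfac A).2.2.2.2.2, (hfac A).2.2.1, hprD A]; simp
    have hKBD : D (Dl rB + rB + pr rB) = 0 := by
      rw [map_add, map_add, (hfac B).2.2.2.2.2, (hfac B).2.2.1, hprD B]; simp
    have e3 : D (G.br (Dl rA + rA + pr rA) (Mag.gam G sg pr Dl B))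
        = (-1:ℚ)^a • G.br (Dl rA + rA + pr rA) (Dl rB - rB - pr rB) := by
      have hneg : (-1:ℚ)^(-1*a) = (-1:ℚ)^a := hE _ _ (-a) (by ring)
      rw [hD_der _ _ hKAg, hKAD, ihB, hneg]; simp
    have e4 : D (G.br (Mag.gam G sg pr Dl A) (Dl rB + rB + pr rB))
        = G.br (Dl rA - rA - pr rA) (Dl rB + rB + pr rB) := by
      rw [hD_der _ _ (hgamg A), hKBD, ihA]; simp
    have hanti : G.br rB (pr rA) = -((-1:ℚ)^(b*a) • G.br (pr rA) rB) :=
      G.antisymm hBg (hfac A).2.2.2.1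
    rw [Mag.gam, map_add, map_add, map_sub, map_smul, map_smul, map_smul,
      sgD B A, sgD A B, e3, e4, hanti,
      show Mag.real G (Mag.mul A B) = G.br rA rB from rfl,
      show Dl (G.br rA rB) = G.br (Dl rA) (Dl rB) from hDl_br (hfac A).1 (hfac B).1,
      show pr (G.br rA rB) = G.br (pr rA) (pr rB) from
        hpr_br (hmono _ _ hleP2 (hfac A).1) (hmono _ _ hleP2 (hfac B).1)]
    have hsgn : ((-1:ℚ)^(a*b)) * ((-1:ℚ)^(b*a)) = 1 := by
      rw [hEm]; exact hE1 _ (a*b) (by ring)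
    have hsgn2 : ((2:ℚ)⁻¹ * (-1:ℚ)^a) * ((-1:ℚ)^((-1)*a)) = (2:ℚ)⁻¹ := by
      rw [mul_assoc, hEm, hE1 _ 0 (by ring), mul_one]
    have hc : (-1:ℚ)^a * (-1:ℚ)^a = 1 := by
      rw [hEm]; exact hE1 _ a (by ring)
    have hd2 : (-1:ℚ)^(b*a) = (-1:ℚ)^(a*b) := hE _ _ 0 (by ring)
    have hd : (-1:ℚ)^(a*b) * (-1:ℚ)^(a*b) = 1 := by
      rw [hEm]; exact hE1 _ (a*b) (by ring)
    simp only [map_add, map_sub, map_smul, map_neg, LinearMap.add_apply, LinearMap.sub_apply, LinearMap.smul_apply, LinearMap.neg_apply, smul_add, smul_sub, smul_neg, smul_smul]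
    match_scalars
    all_goals try simp only [← ha, ← hb, hd2]
    · linear_combination (-(2:ℚ)⁻¹) * hc
    · linear_combination hd - ((2:ℚ)⁻¹) * hc
    · linear_combination ((2:ℚ)⁻¹) * hc
    · linear_combination ((2:ℚ)⁻¹) * hc
    · linear_combination ((2:ℚ)⁻¹) * hc
    · linear_combination (-(2:ℚ)⁻¹) * hc
    · linear_combination (-(2:ℚ)⁻¹) * hc
    · linear_combination (-(2:ℚ)⁻¹) * hc
    · linear_combination (-(2:ℚ)⁻¹) * hc
end

section
/- Let (𝕃(V),∂) with V = V₀ ⊕ V₁, ∂(V₀) = 0, ∂(V₁) ⊆ 𝕃(V₀), be the minimal Quillen model of a 2-cone X, and (L,D) the model of X × X as above. Any Lie algebra morphism Δ : 𝕃(V) → L defined on generators by Δ(v) = v + v' for v ∈ V₀ and Δ(v) = v + v' + Γ((∂v)‾) for v ∈ V₁ (where (∂v)‾ ∈ 𝕄(V₀) is a representative of ∂v) commutes with the differentials, D∘Δ = Δ∘∂, and its composition with each of the two projections (L,D) → (𝕃(V),∂) and (L,D) → (𝕃(V'),∂') is the identity; hence Δ is a Quillen model of the diagonal map X → X × X. 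-/
universe u

section Auxx

variable {Lc : Type u} [AddCommGroup Lc] [Module ℚ Lc]

lemma zpow_neg_one_congr {m n : ℤ} (k : ℤ) (h : m = n + 2 * k) :
    (-1 : ℚ) ^ m = (-1 : ℚ) ^ n := by
  subst h
  rw [zpow_add₀ (by norm_num : (-1 : ℚ) ≠ 0), zpow_mul]
  norm_num

lemma smul_smul_sign {m n r : ℤ} (k : ℤ) (h : m + n = r + 2 * k) (X Y : Lc)
    (hXY : X = Y) : (-1 : ℚ) ^ m • (-1 : ℚ) ^ n • X = (-1 : ℚ) ^ r • Y := by
  subst hXY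
  rw [smul_smul, ← zpow_add₀ (by norm_num : (-1 : ℚ) ≠ 0),
    zpow_neg_one_congr k h]

/-- The prime copy of a magma tree. -/
def prM {V0 W0 : ℤ → Submodule ℚ Lc} (pr : Lc →ₗ[ℚ] Lc)
    (h : ∀ (i : ℤ) (v : Lc), v ∈ V0 i → pr v ∈ W0 i) : Mag V0 → Mag W0
  | .of i v hv => .of i (pr v) (h i v hv)
  | .mul A B => .mul (prM pr h A) (prM pr h B)

lemma prM_deg {V0 W0 : ℤ → Submodule ℚ Lc} (pr : Lc →ₗ[ℚ] Lc)
    (h : ∀ (i : ℤ) (v : Lc), v ∈ V0 i → pr v ∈ W0 i) :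
    ∀ A : Mag V0, (prM pr h A).deg = A.deg
  | .of _ _ _ => rfl
  | .mul A B => by
      simp only [prM, Mag.deg, prM_deg pr h A, prM_deg pr h B]

end Auxx

/-- Theorem 4.4.  Let `(𝕃(V), ∂)` be the minimal Quillen model of a
2-cone `X` and `(L, D)` the model of `X × X`.  Any Lie algebra morphism `Δ : 𝕃(V) → L`
with `Δ(v) = v + v'` for `v ∈ V₀` and `Δ(v) = v + v' + Γ((∂v)‾)` for `v ∈ V₁` commutes
with the differentials, `D ∘ Δ = Δ ∘ ∂` on `𝕃(V)`, and its composition with the two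
projections `(L, D) → (𝕃(V), ∂)` and `(L, D) → (𝕃(V'), ∂')` is the identity (under the
identification of the second copy); hence `Δ` is a Quillen model of the diagonal map
`X → X × X`. -/
theorem statement18
    {Lc : Type u} [AddCommGroup Lc] [Module ℚ Lc] (G : GLA Lc)
    (V0 V1 W0 W1 Sp : ℤ → Submodule ℚ Lc)
    -- the ambient free Lie algebra is reduced
    (hred : G.Reduced)
    (hV0 : ∀ i, V0 i ≤ G.grade i) (hV1 : ∀ i, V1 i ≤ G.grade i)
    (hW0 : ∀ i, W0 i ≤ G.grade i) (hW1 : ∀ i, W1 i ≤ G.grade i)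
    (hSp : ∀ i, Sp i ≤ G.grade i)
    -- the suspension `s(v ⊗ w)`, bilinear, of degree `|v|+|w|+1`
    (sus : Lc →ₗ[ℚ] Lc →ₗ[ℚ] Lc)
    (hsus : ∀ {i j : ℤ} {v w : Lc}, v ∈ V0 i ⊔ V1 i → w ∈ W0 j ⊔ W1 j →
      sus v w ∈ Sp (i + j + 1))
    -- `L` is generated by `V ⊕ W ⊕ s(V ⊗ W)`
    (hgen : G.lieSub (fun i => V0 i ⊔ V1 i ⊔ W0 i ⊔ W1 i ⊔ Sp i) = ⊤)
    -- the derivations `σ_A` for homogeneous `A ∈ 𝕃(V ⊕ W)`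
    (sg : ℤ → Lc → (Lc →ₗ[ℚ] Lc))
    (hsg_grade : ∀ {a : ℤ} {A : Lc}, A ∈ G.lieSub (fun i => V0 i ⊔ V1 i ⊔ W0 i ⊔ W1 i) →
      A ∈ G.grade a → ∀ {n : ℤ} {x : Lc}, x ∈ G.grade n → sg a A x ∈ G.grade (n + a + 1))
    (hsg_der : ∀ {a : ℤ} {A : Lc}, A ∈ G.lieSub (fun i => V0 i ⊔ V1 i ⊔ W0 i ⊔ W1 i) →
      A ∈ G.grade a → ∀ {n : ℤ} (x y : Lc), x ∈ G.grade n →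
      sg a A (G.br x y) = G.br (sg a A x) y + (-1 : ℚ) ^ ((a + 1) * n) • G.br x (sg a A y))
    (hsg_vw : ∀ {i j : ℤ} {v w : Lc}, v ∈ V0 i ⊔ V1 i → w ∈ W0 j ⊔ W1 j →
      sg i v w = sus v w)
    (hsg_wv : ∀ {i j : ℤ} {v w : Lc}, v ∈ V0 i ⊔ V1 i → w ∈ W0 j ⊔ W1 j →
      sg j w v = (-1 : ℚ) ^ (i * j) • sus v w)
    (hsg_vv : ∀ {i i' : ℤ} {v v' : Lc}, v ∈ V0 i ⊔ V1 i → v' ∈ V0 i' ⊔ V1 i' →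
      sg i v v' = 0)
    (hsg_ww : ∀ {j j' : ℤ} {w w' : Lc}, w ∈ W0 j ⊔ W1 j → w' ∈ W0 j' ⊔ W1 j' →
      sg j w w' = 0)
    (hsg_vS : ∀ {i k : ℤ} {v x : Lc}, v ∈ V0 i ⊔ V1 i → x ∈ Sp k → sg i v x = 0)
    (hsg_wS : ∀ {j k : ℤ} {w x : Lc}, w ∈ W0 j ⊔ W1 j → x ∈ Sp k → sg j w x = 0)
    (hsg_Av : ∀ {a : ℤ} {A : Lc}, A ∈ G.lieSub (fun i => V0 i ⊔ V1 i ⊔ W0 i ⊔ W1 i) →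
      A ∈ G.grade a → ∀ {i : ℤ} {v : Lc}, v ∈ V0 i ⊔ V1 i →
      sg a A v = (-1 : ℚ) ^ (i * a) • sg i v A)
    (hsg_Aw : ∀ {a : ℤ} {A : Lc}, A ∈ G.lieSub (fun i => V0 i ⊔ V1 i ⊔ W0 i ⊔ W1 i) →
      A ∈ G.grade a → ∀ {j : ℤ} {w : Lc}, w ∈ W0 j ⊔ W1 j →
      sg a A w = (-1 : ℚ) ^ (j * a) • sg j w A)
    (hsg_AS : ∀ {a : ℤ} {A : Lc}, A ∈ G.lieSub (fun i => V0 i ⊔ V1 i ⊔ W0 i ⊔ W1 i) →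
      A ∈ G.grade a → ∀ {k : ℤ} {x : Lc}, x ∈ Sp k → sg a A x = 0)
    -- the degree `-1` derivation `D` of `L`
    (D : Lc →ₗ[ℚ] Lc)
    (hD_grade : ∀ {i : ℤ} {x : Lc}, x ∈ G.grade i → D x ∈ G.grade (i - 1))
    (hD_der : ∀ {i : ℤ} (x y : Lc), x ∈ G.grade i →
      D (G.br x y) = G.br (D x) y + (-1 : ℚ) ^ ((-1 : ℤ) * i) • G.br x (D y))
    -- `D = ∂_V` on `V`, `D = ∂_W` on `W`: two-stage (2-cone) minimal models
    (hD_V0 : ∀ {i : ℤ} {v : Lc}, v ∈ V0 i → D v = 0)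
    (hD_W0 : ∀ {j : ℤ} {w : Lc}, w ∈ W0 j → D w = 0)
    (hD_V1 : ∀ {i : ℤ} {v : Lc}, v ∈ V1 i → D v ∈ G.lieSub V0)
    (hD_W1 : ∀ {j : ℤ} {w : Lc}, w ∈ W1 j → D w ∈ G.lieSub W0)
    (hD_V1dec : ∀ {i : ℤ} {v : Lc}, v ∈ V1 i → D v ∈ G.dec)
    (hD_W1dec : ∀ {j : ℤ} {w : Lc}, w ∈ W1 j → D w ∈ G.dec)
    -- a chosen magma representative `(∂_V v)‾ ∈ 𝕄(V₀)` of `∂_V v` for `v ∈ V₁`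
    (rep : ∀ (i : ℤ) (v : Lc), v ∈ V1 i → Mag V0)
    (hrep : ∀ (i : ℤ) (v : Lc) (h : v ∈ V1 i), Mag.real G (rep i v h) = D v)
    (hrepdeg : ∀ (i : ℤ) (v : Lc) (h : v ∈ V1 i), Mag.deg (rep i v h) = i - 1)
    -- the value of `D` on the suspension generators, formula (7) of the paper
    (hD_sus00 : ∀ {i j : ℤ} {v w : Lc}, v ∈ V0 i → w ∈ W0 j → D (sus v w) = G.br v w)
    (hD_sus10 : ∀ {i j : ℤ} {v w : Lc}, v ∈ V1 i → w ∈ W0 j →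
      D (sus v w) = G.br v w - (-1 : ℚ) ^ ((i + 1) * j) • sg j w (D v))
    (hD_sus01 : ∀ {i j : ℤ} {v w : Lc}, v ∈ V0 i → w ∈ W1 j →
      D (sus v w) = G.br v w - (-1 : ℚ) ^ i • sg i v (D w))
    (hD_sus11 : ∀ {i j : ℤ} {v w : Lc} (hv : v ∈ V1 i) (hw : w ∈ W1 j),
      D (sus v w) = G.br v w - (-1 : ℚ) ^ ((i + 1) * j) • sg j w (D v)
        - (-1 : ℚ) ^ i • sg i v (D w)
        + (-1 : ℚ) ^ i • Mag.star G sg (j - 1) (rep i v hv) (D w))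
    -- `(L, D)` is a dgl (Theorem 3.8 of the paper)
    (hDD : ∀ x : Lc, D (D x) = 0)
    -- `W = V'` is a copy of `V`: the "prime" map, a dgl isomorphism onto the copy
    (pr : Lc →ₗ[ℚ] Lc)
    (hpr_V0 : ∀ {i : ℤ} {v : Lc}, v ∈ V0 i → pr v ∈ W0 i)
    (hpr_V1 : ∀ {i : ℤ} {v : Lc}, v ∈ V1 i → pr v ∈ W1 i)
    (hpr_br : ∀ {x y : Lc}, x ∈ G.lieSub (fun i => V0 i ⊔ V1 i) →
      y ∈ G.lieSub (fun i => V0 i ⊔ V1 i) → pr (G.br x y) = G.br (pr x) (pr y))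
    (hpr_D : ∀ {x : Lc}, x ∈ G.lieSub (fun i => V0 i ⊔ V1 i) → pr (D x) = D (pr x))
    (hpr_onto0 : ∀ {j : ℤ} {w : Lc}, w ∈ W0 j → ∃ v ∈ V0 j, pr v = w)
    (hpr_onto1 : ∀ {j : ℤ} {w : Lc}, w ∈ W1 j → ∃ v ∈ V1 j, pr v = w)
    -- the Lie morphism `Δ : 𝕃(V) → L` extending `v ↦ v + v'` by `Γ`-correction terms
    (Δf : Lc →ₗ[ℚ] Lc)
    (hΔf_br : ∀ {x y : Lc}, x ∈ G.lieSub (fun i => V0 i ⊔ V1 i) →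
      y ∈ G.lieSub (fun i => V0 i ⊔ V1 i) → Δf (G.br x y) = G.br (Δf x) (Δf y))
    (hΔf_V0 : ∀ {i : ℤ} {v : Lc}, v ∈ V0 i → Δf v = v + pr v)
    (hΔf_V1 : ∀ (i : ℤ) (v : Lc) (h : v ∈ V1 i),
      Δf v = v + pr v + Mag.gam G sg pr Δf (rep i v h))
    -- the two projections of `L` onto `𝕃(V)` and onto the copy `𝕃(V')`
    (p1 p2 : Lc →ₗ[ℚ] Lc)
    (hp1_br : ∀ x y : Lc, p1 (G.br x y) = G.br (p1 x) (p1 y))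
    (hp2_br : ∀ x y : Lc, p2 (G.br x y) = G.br (p2 x) (p2 y))
    (hp1_V : ∀ {i : ℤ} {v : Lc}, v ∈ V0 i ⊔ V1 i → p1 v = v)
    (hp1_W : ∀ {j : ℤ} {w : Lc}, w ∈ W0 j ⊔ W1 j → p1 w = 0)
    (hp1_S : ∀ {k : ℤ} {x : Lc}, x ∈ Sp k → p1 x = 0)
    (hp2_V : ∀ {i : ℤ} {v : Lc}, v ∈ V0 i ⊔ V1 i → p2 v = 0)
    (hp2_W : ∀ {j : ℤ} {w : Lc}, w ∈ W0 j ⊔ W1 j → p2 w = w)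
    (hp2_S : ∀ {k : ℤ} {x : Lc}, x ∈ Sp k → p2 x = 0)
    (hp1_D : ∀ x : Lc, p1 (D x) = D (p1 x))
    (hp2_D : ∀ x : Lc, p2 (D x) = D (p2 x)) :
    (∀ x : Lc, x ∈ G.lieSub (fun i => V0 i ⊔ V1 i) → D (Δf x) = Δf (D x)) ∧
    (∀ x : Lc, x ∈ G.lieSub (fun i => V0 i ⊔ V1 i) → p1 (Δf x) = x) ∧
    (∀ x : Lc, x ∈ G.lieSub (fun i => V0 i ⊔ V1 i) → p2 (Δf x) = pr x) := by
  classical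
  -- basic facts about `lieSub`
  have le_lieSub : ∀ (p : ℤ → Submodule ℚ Lc) (i : ℤ), p i ≤ G.lieSub p := by
    intro p i x hx
    rw [GLA.lieSub, Submodule.mem_sInf]
    intro q hq; exact hq.1 i hx
  have br_lieSub : ∀ (p : ℤ → Submodule ℚ Lc) {x y : Lc},
      x ∈ G.lieSub p → y ∈ G.lieSub p → G.br x y ∈ G.lieSub p := by
    intro p x y hx hy
    rw [GLA.lieSub, Submodule.mem_sInf] at hx hy ⊢
    intro q hq; exact hq.2 x (hx q hq) y (hy q hq)
  have lieSub_mono : ∀ {p q : ℤ → Submodule ℚ Lc}, (∀ i, p i ≤ q i) →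
      G.lieSub p ≤ G.lieSub q := by
    intro p q hpq
    apply sInf_le_sInf
    intro r hr
    exact ⟨fun i => (hpq i).trans (hr.1 i), hr.2⟩
  -- membership shorthands
  have memV0 : ∀ {i : ℤ} {v : Lc}, v ∈ V0 i →
      v ∈ G.lieSub (fun i => V0 i ⊔ V1 i) :=
    fun h => le_lieSub _ _ (Submodule.mem_sup_left h)
  have memV1 : ∀ {i : ℤ} {v : Lc}, v ∈ V1 i →
      v ∈ G.lieSub (fun i => V0 i ⊔ V1 i) :=
    fun h => le_lieSub _ _ (Submodule.mem_sup_right h)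
  have memV0_4 : ∀ {i : ℤ} {v : Lc}, v ∈ V0 i →
      v ∈ G.lieSub (fun i => V0 i ⊔ V1 i ⊔ W0 i ⊔ W1 i) :=
    fun h => le_lieSub _ _
      (Submodule.mem_sup_left (Submodule.mem_sup_left (Submodule.mem_sup_left h)))
  have memW0_4 : ∀ {j : ℤ} {w : Lc}, w ∈ W0 j →
      w ∈ G.lieSub (fun i => V0 i ⊔ V1 i ⊔ W0 i ⊔ W1 i) :=
    fun h => le_lieSub _ _ (Submodule.mem_sup_left (Submodule.mem_sup_right h))
  -- bundles for magma trees over `V0` and over `W0`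
  have magV : ∀ A : Mag V0, Mag.real G A ∈ G.grade (Mag.deg A) ∧
      D (Mag.real G A) = 0 ∧ Mag.real G A ∈ G.lieSub (fun i => V0 i ⊔ V1 i) ∧
      Mag.real G A ∈ G.lieSub (fun i => V0 i ⊔ V1 i ⊔ W0 i ⊔ W1 i) := by
    intro A
    induction A with
    | of i v hv =>
      exact ⟨hV0 i hv, hD_V0 hv, memV0 hv, memV0_4 hv⟩
    | mul A B ihA ihB =>
      obtain ⟨hAg, hAD, hAV, hA4⟩ := ihA
      obtain ⟨hBg, hBD, hBV, hB4⟩ := ihB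
      refine ⟨G.br_mem hAg hBg, ?_, br_lieSub _ hAV hBV, br_lieSub _ hA4 hB4⟩
      rw [show Mag.real G (Mag.mul A B) = G.br (Mag.real G A) (Mag.real G B) from rfl,
        hD_der _ _ hAg, hAD, hBD, map_zero]
      simp
  have magW : ∀ T : Mag W0, Mag.real G T ∈ G.grade (Mag.deg T) ∧
      D (Mag.real G T) = 0 ∧
      Mag.real G T ∈ G.lieSub (fun i => V0 i ⊔ V1 i ⊔ W0 i ⊔ W1 i) := by
    intro T
    induction T with
    | of j w hw =>
      exact ⟨hW0 j hw, hD_W0 hw, memW0_4 hw⟩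
    | mul A B ihA ihB =>
      obtain ⟨hAg, hAD, hA4⟩ := ihA
      obtain ⟨hBg, hBD, hB4⟩ := ihB
      refine ⟨G.br_mem hAg hBg, ?_, br_lieSub _ hA4 hB4⟩
      rw [show Mag.real G (Mag.mul A B) = G.br (Mag.real G A) (Mag.real G B) from rfl,
        hD_der _ _ hAg, hAD, hBD, map_zero]
      simp
  -- the prime copy of trees
  have hprM : ∀ (i : ℤ) (v : Lc), v ∈ V0 i → pr v ∈ W0 i := fun _ _ h => hpr_V0 h
  have prM_real : ∀ A : Mag V0, Mag.real G (prM pr hprM A) = pr (Mag.real G A) := by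
    intro A
    induction A with
    | of i v hv => rfl
    | mul A B ihA ihB =>
      rw [show prM pr hprM (Mag.mul A B) = Mag.mul (prM pr hprM A) (prM pr hprM B)
          from rfl]
      rw [show Mag.real G (Mag.mul (prM pr hprM A) (prM pr hprM B))
          = G.br (Mag.real G (prM pr hprM A)) (Mag.real G (prM pr hprM B)) from rfl,
        ihA, ihB,
        show Mag.real G (Mag.mul A B) = G.br (Mag.real G A) (Mag.real G B) from rfl,
        hpr_br (magV A).2.2.1 (magV B).2.2.1]
  have hne : (-1 : ℚ) ≠ 0 := by norm_num
  have sq : ∀ (m : ℤ) (X Y : Lc), X = Y →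
      (-1 : ℚ) ^ m • (-1 : ℚ) ^ m • X = Y := by
    intro m X Y hXY
    have := smul_smul_sign (Lc := Lc) (m := m) (n := m) (r := 0) m (by ring) X Y hXY
    rwa [zpow_zero, one_smul] at this
  -- grade facts for primed reals
  have prreal_grade : ∀ A : Mag V0, pr (Mag.real G A) ∈ G.grade (Mag.deg A) := by
    intro A
    have h := (magW (prM pr hprM A)).1
    rwa [prM_real, prM_deg] at h
  have prreal_D : ∀ A : Mag V0, D (pr (Mag.real G A)) = 0 := by
    intro A
    have h := (magW (prM pr hprM A)).2.1
    rwa [prM_real] at h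
  -- Lemma A : `D (σ_w α) = -[w, α]` for `w ∈ W0`, `α ∈ 𝕄(V0)`
  have claimA : ∀ (j : ℤ) (w : Lc), w ∈ W0 j → ∀ A : Mag V0,
      D (sg j w (Mag.real G A)) = - G.br w (Mag.real G A) := by
    intro j w hw A
    have hw4 := memW0_4 hw
    have hwg := hW0 j hw
    have hwm : w ∈ W0 j ⊔ W1 j := Submodule.mem_sup_left hw
    induction A with
    | of i v hv =>
      have hvm : v ∈ V0 i ⊔ V1 i := Submodule.mem_sup_left hv
      rw [show Mag.real G (Mag.of i v hv) = v from rfl]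
      rw [hsg_wv hvm hwm, map_smul, hD_sus00 hv hw,
        G.antisymm hwg (hV0 i hv), neg_neg]
      rw [mul_comm j i]
    | mul A B ihA ihB =>
      obtain ⟨hAg, hAD, hAV, hA4⟩ := magV A
      obtain ⟨hBg, hBD, hBV, hB4⟩ := magV B
      rw [show Mag.real G (Mag.mul A B) = G.br (Mag.real G A) (Mag.real G B) from rfl]
      rw [hsg_der hw4 hwg _ _ hAg, map_add, map_smul,
        hD_der _ _ (hsg_grade hw4 hwg hAg), hD_der _ _ hAg,
        ihA, ihB, hAD, hBD, G.jacobi (Mag.real G B) hwg hAg]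
      simp only [map_zero, map_neg, LinearMap.zero_apply, LinearMap.neg_apply,
        smul_zero, add_zero, zero_add, smul_neg]
      rw [smul_smul_sign (m := (j + 1) * Mag.deg A) (n := (-1) * Mag.deg A)
        (r := j * Mag.deg A) 0 (by ring) _ _ rfl]
      module
  -- Claim 2 : `D (σ_α T) = [α, T]` for `α ∈ 𝕄(V0)`, `T ∈ 𝕄(W0)`
  have claim2 : ∀ (A : Mag V0) (T : Mag W0),
      D (sg (Mag.deg A) (Mag.real G A) (Mag.real G T)) =
        G.br (Mag.real G A) (Mag.real G T) := by
    intro A T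
    obtain ⟨hAg, hAD, hAV, hA4⟩ := magV A
    induction T with
    | of j w hw =>
      have hwm : w ∈ W0 j ⊔ W1 j := Submodule.mem_sup_left hw
      rw [show Mag.real G (Mag.of j w hw) = w from rfl]
      rw [hsg_Aw hA4 hAg hwm, map_smul, claimA j w hw A,
        G.antisymm hAg (hW0 j hw), smul_neg]
      rw [mul_comm j (Mag.deg A)]
    | mul T1 T2 ih1 ih2 =>
      obtain ⟨hT1g, hT1D, hT14⟩ := magW T1
      obtain ⟨hT2g, hT2D, hT24⟩ := magW T2
      rw [show Mag.real G (Mag.mul T1 T2) = G.br (Mag.real G T1) (Mag.real G T2)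
          from rfl]
      rw [hsg_der hA4 hAg _ _ hT1g, map_add, map_smul,
        hD_der _ _ (hsg_grade hA4 hAg hT1g), hD_der _ _ hT1g,
        ih1, ih2, hT1D, hT2D, G.jacobi (Mag.real G T2) hAg hT1g]
      simp only [map_zero, LinearMap.zero_apply, smul_zero, add_zero, zero_add]
      rw [smul_smul_sign (m := (Mag.deg A + 1) * Mag.deg T1)
        (n := (-1) * Mag.deg T1) (r := Mag.deg A * Mag.deg T1) 0 (by ring) _ _ rfl]
  -- `Δf` on reals of `V0`-trees
  have Δbundle : ∀ A : Mag V0, Δf (Mag.real G A) ∈ G.grade (Mag.deg A) ∧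
      D (Δf (Mag.real G A)) = 0 := by
    intro A
    induction A with
    | of i v hv =>
      rw [show Mag.real G (Mag.of i v hv) = v from rfl, hΔf_V0 hv]
      constructor
      · exact add_mem (hV0 i hv) (hW0 i (hpr_V0 hv))
      · rw [map_add, hD_V0 hv, hD_W0 (hpr_V0 hv), add_zero]
    | mul A B ihA ihB =>
      obtain ⟨hAg, hAD, hAV, hA4⟩ := magV A
      obtain ⟨hBg, hBD, hBV, hB4⟩ := magV B
      rw [show Mag.real G (Mag.mul A B) = G.br (Mag.real G A) (Mag.real G B) from rfl,
        hΔf_br hAV hBV]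
      constructor
      · exact G.br_mem ihA.1 ihB.1
      · rw [hD_der _ _ ihA.1, ihA.2, ihB.2, map_zero]
        simp
  -- grading of `Γ`
  have gam_grade : ∀ A : Mag V0, Mag.gam G sg pr Δf A ∈ G.grade (Mag.deg A + 1) := by
    intro A
    induction A with
    | of i v hv =>
      exact Submodule.zero_mem _
    | mul A B ihA ihB =>
      obtain ⟨hAg, hAD, hAV, hA4⟩ := magV A
      obtain ⟨hBg, hBD, hBV, hB4⟩ := magV B
      rw [show Mag.gam G sg pr Δf (Mag.mul A B) =
        sg (Mag.deg A) (Mag.real G A) (pr (Mag.real G B))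
          - (-1 : ℚ) ^ (Mag.deg A * Mag.deg B) •
              sg (Mag.deg B) (Mag.real G B) (pr (Mag.real G A))
          + ((2 : ℚ)⁻¹ * (-1 : ℚ) ^ Mag.deg A) •
              G.br (Δf (Mag.real G A) + Mag.real G A + pr (Mag.real G A))
                (Mag.gam G sg pr Δf B)
          + (2 : ℚ)⁻¹ • G.br (Mag.gam G sg pr Δf A)
              (Δf (Mag.real G B) + Mag.real G B + pr (Mag.real G B)) from rfl,
        show Mag.deg (Mag.mul A B) = Mag.deg A + Mag.deg B from rfl]
      refine add_mem (add_mem (sub_mem ?_ ?_) ?_) ?_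
      · have h := hsg_grade hA4 hAg (prreal_grade B)
        rwa [show Mag.deg B + Mag.deg A + 1 = Mag.deg A + Mag.deg B + 1 from by ring]
          at h
      · exact Submodule.smul_mem _ _ (hsg_grade hB4 hBg (prreal_grade A))
      · refine Submodule.smul_mem _ _ ?_
        have h := G.br_mem (add_mem (add_mem (Δbundle A).1 hAg) (prreal_grade A)) ihB
        rwa [show Mag.deg A + (Mag.deg B + 1) = Mag.deg A + Mag.deg B + 1 from by ring]
          at h
      · refine Submodule.smul_mem _ _ ?_
        have h := G.br_mem ihA (add_mem (add_mem (Δbundle B).1 hBg) (prreal_grade B))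
        rwa [show Mag.deg A + 1 + Mag.deg B = Mag.deg A + Mag.deg B + 1 from by ring]
          at h
  -- KEY LEMMA : `D (Γ A) = Δf Ā - Ā - Ā'`
  have keyD : ∀ A : Mag V0, D (Mag.gam G sg pr Δf A) =
      Δf (Mag.real G A) - Mag.real G A - pr (Mag.real G A) := by
    intro A
    induction A with
    | of i v hv =>
      rw [show Mag.gam G sg pr Δf (Mag.of i v hv) = 0 from rfl, map_zero,
        show Mag.real G (Mag.of i v hv) = v from rfl, hΔf_V0 hv]
      abel
    | mul A B ihA ihB =>
      obtain ⟨hAg, hAD, hAV, hA4⟩ := magV A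
      obtain ⟨hBg, hBD, hBV, hB4⟩ := magV B
      have hA'g := prreal_grade A
      have hB'g := prreal_grade B
      have hΔA := Δbundle A
      have hΔB := Δbundle B
      have c1 : D (sg (Mag.deg A) (Mag.real G A) (pr (Mag.real G B))) =
          G.br (Mag.real G A) (pr (Mag.real G B)) := by
        have h := claim2 A (prM pr hprM B)
        rwa [prM_real] at h
      have c2 : D (sg (Mag.deg B) (Mag.real G B) (pr (Mag.real G A))) =
          G.br (Mag.real G B) (pr (Mag.real G A)) := by
        have h := claim2 B (prM pr hprM A)
        rwa [prM_real] at h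
      have flip2 : (-1 : ℚ) ^ (Mag.deg A * Mag.deg B) •
          G.br (Mag.real G B) (pr (Mag.real G A)) =
          - G.br (pr (Mag.real G A)) (Mag.real G B) := by
        rw [G.antisymm hBg hA'g, smul_neg, mul_comm (Mag.deg B) (Mag.deg A),
          sq (Mag.deg A * Mag.deg B) _ _ rfl]
      have hXg : Δf (Mag.real G A) + Mag.real G A + pr (Mag.real G A) ∈
          G.grade (Mag.deg A) := add_mem (add_mem hΔA.1 hAg) hA'g
      have hDX : D (Δf (Mag.real G A) + Mag.real G A + pr (Mag.real G A)) = 0 := by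
        rw [map_add, map_add, hΔA.2, hAD, prreal_D A]; simp
      have hDY : D (Δf (Mag.real G B) + Mag.real G B + pr (Mag.real G B)) = 0 := by
        rw [map_add, map_add, hΔB.2, hBD, prreal_D B]; simp
      rw [show Mag.gam G sg pr Δf (Mag.mul A B) =
        sg (Mag.deg A) (Mag.real G A) (pr (Mag.real G B))
          - (-1 : ℚ) ^ (Mag.deg A * Mag.deg B) •
              sg (Mag.deg B) (Mag.real G B) (pr (Mag.real G A))
          + ((2 : ℚ)⁻¹ * (-1 : ℚ) ^ Mag.deg A) •
              G.br (Δf (Mag.real G A) + Mag.real G A + pr (Mag.real G A))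
                (Mag.gam G sg pr Δf B)
          + (2 : ℚ)⁻¹ • G.br (Mag.gam G sg pr Δf A)
              (Δf (Mag.real G B) + Mag.real G B + pr (Mag.real G B)) from rfl]
      rw [map_add, map_add, map_sub, map_smul, map_smul, map_smul, c1, c2,
        hD_der _ _ hXg, hD_der _ _ (gam_grade A), ihA, ihB, hDX, hDY, flip2,
        show Mag.real G (Mag.mul A B) = G.br (Mag.real G A) (Mag.real G B) from rfl,
        hΔf_br hAV hBV, hpr_br hAV hBV]
      have hsc : ∀ X : Lc, ((2 : ℚ)⁻¹ * (-1 : ℚ) ^ Mag.deg A) •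
          ((-1 : ℚ) ^ ((-1 : ℤ) * Mag.deg A) • X) = (2 : ℚ)⁻¹ • X := by
        intro X
        rw [smul_smul, mul_assoc, ← zpow_add₀ hne,
          zpow_neg_one_congr (n := 0) 0 (by ring), zpow_zero, mul_one]
      simp only [map_zero, LinearMap.zero_apply, zero_add, add_zero, smul_zero,
        map_add, map_sub, LinearMap.add_apply, LinearMap.sub_apply, hsc]
      module
  -- `p1`, `p2` vanish on the sigma- and Gamma-terms
  have pw : ∀ (j : ℤ) (w : Lc), w ∈ W0 j → ∀ A : Mag V0,
      p1 (sg j w (Mag.real G A)) = 0 ∧ p2 (sg j w (Mag.real G A)) = 0 := by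
    intro j w hw A
    have hw4 := memW0_4 hw
    have hwg := hW0 j hw
    have hwm : w ∈ W0 j ⊔ W1 j := Submodule.mem_sup_left hw
    induction A with
    | of i v hv =>
      have hvm : v ∈ V0 i ⊔ V1 i := Submodule.mem_sup_left hv
      rw [show Mag.real G (Mag.of i v hv) = v from rfl, hsg_wv hvm hwm, map_smul,
        map_smul, hp1_S (hsus hvm hwm), hp2_S (hsus hvm hwm), smul_zero]
      exact ⟨rfl, rfl⟩
    | mul A B ihA ihB =>
      obtain ⟨hAg, hAD, hAV, hA4⟩ := magV A
      rw [show Mag.real G (Mag.mul A B) = G.br (Mag.real G A) (Mag.real G B) from rfl,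
        hsg_der hw4 hwg _ _ hAg]
      constructor
      · rw [map_add, map_smul, hp1_br, hp1_br, ihA.1, ihB.1]
        simp
      · rw [map_add, map_smul, hp2_br, hp2_br, ihA.2, ihB.2]
        simp
  have pT : ∀ (A : Mag V0) (T : Mag W0),
      p1 (sg (Mag.deg A) (Mag.real G A) (Mag.real G T)) = 0 ∧
      p2 (sg (Mag.deg A) (Mag.real G A) (Mag.real G T)) = 0 := by
    intro A T
    obtain ⟨hAg, hAD, hAV, hA4⟩ := magV A
    induction T with
    | of j w hw =>
      have hwm : w ∈ W0 j ⊔ W1 j := Submodule.mem_sup_left hw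
      rw [show Mag.real G (Mag.of j w hw) = w from rfl, hsg_Aw hA4 hAg hwm, map_smul,
        map_smul, (pw j w hw A).1, (pw j w hw A).2, smul_zero]
      exact ⟨rfl, rfl⟩
    | mul T1 T2 ih1 ih2 =>
      obtain ⟨hT1g, hT1D, hT14⟩ := magW T1
      rw [show Mag.real G (Mag.mul T1 T2) = G.br (Mag.real G T1) (Mag.real G T2)
          from rfl, hsg_der hA4 hAg _ _ hT1g]
      constructor
      · rw [map_add, map_smul, hp1_br, hp1_br, ih1.1, ih2.1]
        simp
      · rw [map_add, map_smul, hp2_br, hp2_br, ih1.2, ih2.2]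
        simp
  have pgam : ∀ A : Mag V0, p1 (Mag.gam G sg pr Δf A) = 0 ∧
      p2 (Mag.gam G sg pr Δf A) = 0 := by
    intro A
    induction A with
    | of i v hv =>
      rw [show Mag.gam G sg pr Δf (Mag.of i v hv) = 0 from rfl, map_zero, map_zero]
      exact ⟨rfl, rfl⟩
    | mul A B ihA ihB =>
      have e1 : p1 (sg (Mag.deg A) (Mag.real G A) (pr (Mag.real G B))) = 0 ∧
          p2 (sg (Mag.deg A) (Mag.real G A) (pr (Mag.real G B))) = 0 := by
        have h := pT A (prM pr hprM B)
        rwa [prM_real] at h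
      have e2 : p1 (sg (Mag.deg B) (Mag.real G B) (pr (Mag.real G A))) = 0 ∧
          p2 (sg (Mag.deg B) (Mag.real G B) (pr (Mag.real G A))) = 0 := by
        have h := pT B (prM pr hprM A)
        rwa [prM_real] at h
      rw [show Mag.gam G sg pr Δf (Mag.mul A B) =
        sg (Mag.deg A) (Mag.real G A) (pr (Mag.real G B))
          - (-1 : ℚ) ^ (Mag.deg A * Mag.deg B) •
              sg (Mag.deg B) (Mag.real G B) (pr (Mag.real G A))
          + ((2 : ℚ)⁻¹ * (-1 : ℚ) ^ Mag.deg A) •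
              G.br (Δf (Mag.real G A) + Mag.real G A + pr (Mag.real G A))
                (Mag.gam G sg pr Δf B)
          + (2 : ℚ)⁻¹ • G.br (Mag.gam G sg pr Δf A)
              (Δf (Mag.real G B) + Mag.real G B + pr (Mag.real G B)) from rfl]
      constructor
      · rw [map_add, map_add, map_sub, map_smul, map_smul, map_smul, e1.1, e2.1,
          hp1_br, hp1_br, ihA.1, ihB.1]
        simp
      · rw [map_add, map_add, map_sub, map_smul, map_smul, map_smul, e1.2, e2.2,
          hp2_br, hp2_br, ihA.2, ihB.2]
        simp
  -- the set of good homogeneous elements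
  set S : Set Lc := {x | ∃ i : ℤ, x ∈ G.grade i ∧
    x ∈ G.lieSub (fun i => V0 i ⊔ V1 i) ∧ Δf x ∈ G.grade i ∧
    D x ∈ G.lieSub (fun i => V0 i ⊔ V1 i) ∧ D (Δf x) = Δf (D x) ∧
    p1 (Δf x) = x ∧ p2 (Δf x) = pr x} with hSdef
  have hSbr : ∀ x ∈ S, ∀ y ∈ S, G.br x y ∈ S := by
    rintro x ⟨i, hxg, hxV, hΔxg, hDxV, hxD, hx1, hx2⟩
      y ⟨j, hyg, hyV, hΔyg, hDyV, hyD, hy1, hy2⟩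
    refine ⟨i + j, G.br_mem hxg hyg, br_lieSub _ hxV hyV, ?_, ?_, ?_, ?_, ?_⟩
    · rw [hΔf_br hxV hyV]
      exact G.br_mem hΔxg hΔyg
    · rw [hD_der _ _ hxg]
      exact add_mem (br_lieSub _ hDxV hyV)
        (Submodule.smul_mem _ _ (br_lieSub _ hxV hDyV))
    · rw [hΔf_br hxV hyV, hD_der _ _ hΔxg, hD_der _ _ hxg, map_add, map_smul,
        hΔf_br hDxV hyV, hΔf_br hxV hDyV, hxD, hyD]
    · rw [hΔf_br hxV hyV, hp1_br, hx1, hy1]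
    · rw [hΔf_br hxV hyV, hp2_br, hx2, hy2, hpr_br hxV hyV]
  have hSV0 : ∀ (i : ℤ) (v : Lc), v ∈ V0 i → v ∈ S := by
    intro i v hv
    have hvm : v ∈ V0 i ⊔ V1 i := Submodule.mem_sup_left hv
    have hwm : pr v ∈ W0 i ⊔ W1 i := Submodule.mem_sup_left (hpr_V0 hv)
    refine ⟨i, hV0 i hv, memV0 hv, ?_, ?_, ?_, ?_, ?_⟩
    · rw [hΔf_V0 hv]
      exact add_mem (hV0 i hv) (hW0 i (hpr_V0 hv))
    · rw [hD_V0 hv]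
      exact Submodule.zero_mem _
    · rw [hΔf_V0 hv, map_add, hD_V0 hv, hD_W0 (hpr_V0 hv), map_zero, add_zero]
    · rw [hΔf_V0 hv, map_add, hp1_V hvm, hp1_W hwm, add_zero]
    · rw [hΔf_V0 hv, map_add, hp2_V hvm, hp2_W hwm, zero_add]
  have hSV1 : ∀ (i : ℤ) (v : Lc), v ∈ V1 i → v ∈ S := by
    intro i v hv
    have hvm : v ∈ V0 i ⊔ V1 i := Submodule.mem_sup_right hv
    have hwm : pr v ∈ W0 i ⊔ W1 i := Submodule.mem_sup_right (hpr_V1 hv)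
    have hDvV : D v ∈ G.lieSub (fun i => V0 i ⊔ V1 i) :=
      lieSub_mono (fun k => le_sup_left) (hD_V1 hv)
    have hrg : Mag.gam G sg pr Δf (rep i v hv) ∈ G.grade i := by
      have h := gam_grade (rep i v hv)
      rwa [hrepdeg, show i - 1 + 1 = i from by ring] at h
    refine ⟨i, hV1 i hv, memV1 hv, ?_, hDvV, ?_, ?_, ?_⟩
    · rw [hΔf_V1 i v hv]
      exact add_mem (add_mem (hV1 i hv) (hW1 i (hpr_V1 hv))) hrg
    · rw [hΔf_V1 i v hv, map_add, map_add, keyD (rep i v hv), hrep i v hv,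
        ← hpr_D (memV1 hv)]
      abel
    · rw [hΔf_V1 i v hv, map_add, map_add, hp1_V hvm, hp1_W hwm,
        (pgam (rep i v hv)).1, add_zero, add_zero]
    · rw [hΔf_V1 i v hv, map_add, map_add, hp2_V hvm, hp2_W hwm,
        (pgam (rep i v hv)).2, add_zero, zero_add]
  -- the span of `S` contains the Lie subalgebra generated by `V`
  have hQ : G.lieSub (fun i => V0 i ⊔ V1 i) ≤ Submodule.span ℚ S := by
    apply sInf_le
    constructor
    · intro i x hx
      rcases Submodule.mem_sup.1 hx with ⟨y, hy, z, hz, rfl⟩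
      exact add_mem (Submodule.subset_span (hSV0 i y hy))
        (Submodule.subset_span (hSV1 i z hz))
    · intro x hx y hy
      have key : ∀ z ∈ S, G.br z y ∈ Submodule.span ℚ S := by
        intro z hzS
        have hle : Submodule.span ℚ S ≤
            Submodule.comap (G.br z) (Submodule.span ℚ S) := by
          rw [Submodule.span_le]
          intro u hu
          exact Submodule.subset_span (hSbr z hzS u hu)
        exact hle hy
      have hle : Submodule.span ℚ S ≤
          Submodule.comap (G.br.flip y) (Submodule.span ℚ S) := by
        rw [Submodule.span_le]
        intro z hz
        exact key z hz
      exact hle hx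
  apply And.intro
  · intro x hx
    have hle : Submodule.span ℚ S ≤ LinearMap.ker (D ∘ₗ Δf - Δf ∘ₗ D) := by
      rw [Submodule.span_le]
      rintro z ⟨i, _, _, _, _, hzD, _, _⟩
      simp only [SetLike.mem_coe, LinearMap.mem_ker, LinearMap.sub_apply,
        LinearMap.comp_apply, hzD, sub_self]
    have h := hle (hQ hx)
    simp only [LinearMap.mem_ker, LinearMap.sub_apply, LinearMap.comp_apply,
      sub_eq_zero] at h
    exact h
  apply And.intro
  · intro x hx
    have hle : Submodule.span ℚ S ≤ LinearMap.ker (p1 ∘ₗ Δf - LinearMap.id) := by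
      rw [Submodule.span_le]
      rintro z ⟨i, _, _, _, _, _, hz1, _⟩
      simp only [SetLike.mem_coe, LinearMap.mem_ker, LinearMap.sub_apply,
        LinearMap.comp_apply, LinearMap.id_apply, hz1, sub_self]
    have h := hle (hQ hx)
    simp only [LinearMap.mem_ker, LinearMap.sub_apply, LinearMap.comp_apply,
      LinearMap.id_apply, sub_eq_zero] at h
    exact h
  · intro x hx
    have hle : Submodule.span ℚ S ≤ LinearMap.ker (p2 ∘ₗ Δf - pr) := by
      rw [Submodule.span_le]
      rintro z ⟨i, _, _, _, _, _, _, hz2⟩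
      simp only [SetLike.mem_coe, LinearMap.mem_ker, LinearMap.sub_apply,
        LinearMap.comp_apply, hz2, sub_self]
    have h := hle (hQ hx)
    simp only [LinearMap.mem_ker, LinearMap.sub_apply, LinearMap.comp_apply,
      sub_eq_zero] at h
    exact h
end
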